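/- arXiv:1001.1913 — 2 statements merged into one kernel-verified Lean document; each statement's English description precedes it below -/
import Mathlib

section
/- Let p be prime, m ≥ 1, and k ≥ 2 an integer. For any Dirichlet character χ modulo p^m, defining c_t = ∑_{n : tn ≡ 1 mod p^m} μ(n)/n^k for t coprime to p^m and c_t = 0 otherwise, one has ∑_{t mod p^m} χ(t) c_t = L(k, χ̄)^{-1} (1 - χ̄(p) p^{-k})^{-1}. -/
open ArithmeticFunction

private lemma moebius_norm_le (n : ℕ) : ‖((moebius n : ℤ) : ℂ)‖ ≤ 1 := by
  have h := abs_moebius_le_one (n := n)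
  rw [show ((moebius n : ℤ) : ℂ) = (((moebius n : ℤ) : ℝ) : ℂ) by push_cast; ring,
    Complex.norm_real, Real.norm_eq_abs, ← Int.cast_abs]
  exact_mod_cast h

private lemma summable_aux (k : ℕ) (hk : 2 ≤ k) (cond : ℕ → Prop) [DecidablePred cond] :
    Summable (fun n : ℕ => if cond n then (moebius n : ℂ) / (n : ℂ) ^ k else 0) := by
  apply Summable.of_norm_bounded (g := fun n : ℕ => 1 / (n : ℝ) ^ k)
    (Real.summable_one_div_nat_pow.mpr (by omega))
  intro n
  rcases eq_or_ne n 0 with rfl | hn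
  · simp
  have hpos : (0:ℝ) < (n : ℝ) ^ k := by positivity
  split_ifs with h
  · rw [norm_div, norm_pow, Complex.norm_natCast, div_le_div_iff₀ hpos hpos]
    have := moebius_norm_le n
    nlinarith [pow_pos (show (0:ℝ) < n by positivity) k]
  · simp only [norm_zero]
    positivity

private lemma key_sum (N : ℕ) [NeZero N] (χ : DirichletCharacter ℂ N) (c : ℂ) (n : ℕ) :
    ∑ t ∈ Finset.range N, χ (t : ZMod N) *
        (if Nat.Coprime t N then (if t * n % N = 1 % N then c else 0) else 0)
      = (starRingEnd ℂ) (χ (n : ZMod N)) * c := by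
  have step1 : ∀ t : ℕ, χ (t : ZMod N) *
      (if Nat.Coprime t N then (if t * n % N = 1 % N then c else 0) else 0)
      = (fun x : ZMod N => if x * (n : ZMod N) = 1 then χ x * c else 0) (t : ZMod N) := by
    intro t
    simp only
    have hcond : (t * n % N = 1 % N) ↔ ((t : ZMod N) * (n : ZMod N) = 1) := by
      rw [← ZMod.natCast_eq_natCast_iff' (t * n) 1 N]; push_cast; simp
    by_cases hc : Nat.Coprime t N
    · rw [if_pos hc]
      by_cases hx : (t : ZMod N) * (n : ZMod N) = 1 <;> simp [hx, hcond]
    · rw [if_neg hc]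
      have hu : ¬ IsUnit ((t : ℕ) : ZMod N) := by rwa [ZMod.isUnit_iff_coprime]
      have hx : ¬ ((t : ZMod N) * (n : ZMod N) = 1) := fun h => hu (IsUnit.of_mul_eq_one _ h)
      simp [hx]
  rw [Finset.sum_congr rfl (fun t _ => step1 t)]
  rw [show ∑ t ∈ Finset.range N,
      (fun x : ZMod N => if x * (n : ZMod N) = 1 then χ x * c else 0) (t : ZMod N)
      = ∑ x : ZMod N, (if x * (n : ZMod N) = 1 then χ x * c else 0) from
    Finset.sum_nbij' (fun t => (t : ZMod N)) (fun x => x.val)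
      (fun t _ => Finset.mem_univ _) (fun x _ => Finset.mem_range.mpr (ZMod.val_lt x))
      (fun t ht => ZMod.val_cast_of_lt (Finset.mem_range.mp ht))
      (fun x _ => ZMod.natCast_rightInverse x) (fun t _ => rfl)]
  by_cases hn : IsUnit ((n : ℕ) : ZMod N)
  · obtain ⟨u, hun⟩ := hn
    have hcond : ∀ x : ZMod N, (x * (n : ZMod N) = 1) ↔ x = ↑u⁻¹ := by
      intro x; rw [← hun, Units.mul_eq_one_iff_eq_inv]
    simp_rw [hcond]
    rw [Finset.sum_ite_eq' Finset.univ (↑u⁻¹ : ZMod N) (fun x => χ x * c)]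
    simp only [Finset.mem_univ, if_true]
    congr 1
    have h1 : χ ↑u⁻¹ * χ (n : ZMod N) = 1 := by
      rw [← map_mul, ← hun, Units.inv_mul]; exact χ.map_one
    have h2 : ‖χ (n : ZMod N)‖ = 1 := by rw [← hun]; exact χ.unit_norm_eq_one u
    rw [← Complex.inv_eq_conj h2]
    exact eq_inv_of_mul_eq_one_left h1
  · have h0 : χ (n : ZMod N) = 0 := χ.map_nonunit hn
    have hx : ∀ x : ZMod N, ¬ (x * (n : ZMod N) = 1) := fun x h =>
      hn (IsUnit.of_mul_eq_one _ (by rwa [mul_comm]))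
    simp [hx, h0]

/-- For `p` prime, `m ≥ 1`, `k ≥ 2` and a Dirichlet character `χ` mod `p^m`,
with `c_t = ∑_{n : tn ≡ 1 mod p^m} μ(n)/n^k` for `t` coprime to `p^m` (and `0` otherwise),
`∑_{t mod p^m} χ(t) c_t = L(k, χ̄)⁻¹ (1 - χ̄(p) p^{-k})⁻¹`. -/
theorem char_sum_ct_eq_inv_LFunction (p m k : ℕ) (hp : p.Prime) (hm : 1 ≤ m)
    (hk : 2 ≤ k) [NeZero (p ^ m)] (χ : DirichletCharacter ℂ (p ^ m)) :
    ∑ t ∈ Finset.range (p ^ m), χ (t : ZMod (p ^ m)) *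
        (if Nat.Coprime t (p ^ m) then
          ∑' n : ℕ, (if t * n % p ^ m = 1 % p ^ m then (moebius n : ℂ) / (n : ℂ) ^ k else 0)
        else 0)
      = (DirichletCharacter.LFunction (χ.ringHomComp (starRingEnd ℂ)) k)⁻¹ *
        (1 - (χ.ringHomComp (starRingEnd ℂ)) (p : ZMod (p ^ m)) * ((p : ℂ) ^ k)⁻¹)⁻¹ := by
  -- the Euler factor at p is trivial
  have hp0 : (χ.ringHomComp (starRingEnd ℂ)) (p : ZMod (p ^ m)) = 0 := by
    apply MulChar.map_nonunit
    rw [ZMod.isUnit_iff_coprime]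
    intro h
    have h1 : p ∣ 1 := h ▸ Nat.dvd_gcd dvd_rfl (dvd_pow_self p (by omega))
    exact hp.one_lt.ne' (Nat.dvd_one.mp h1)
  rw [hp0, zero_mul, sub_zero, inv_one, mul_one]
  -- rewrite LHS as a single tsum
  have hrw : ∀ t ∈ Finset.range (p ^ m), χ (t : ZMod (p ^ m)) *
      (if Nat.Coprime t (p ^ m) then
        ∑' n : ℕ, (if t * n % p ^ m = 1 % p ^ m then (moebius n : ℂ) / (n : ℂ) ^ k else 0) else 0)
      = ∑' n : ℕ, χ (t : ZMod (p ^ m)) *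
        (if Nat.Coprime t (p ^ m) then
          (if t * n % p ^ m = 1 % p ^ m then (moebius n : ℂ) / (n : ℂ) ^ k else 0) else 0) := by
    intro t _
    by_cases hc : Nat.Coprime t (p ^ m)
    · simp only [if_pos hc]; exact (tsum_mul_left).symm
    · simp [hc]
  rw [Finset.sum_congr rfl hrw, ← Summable.tsum_finsetSum (fun t _ => by
    by_cases hc : Nat.Coprime t (p ^ m)
    · simp only [if_pos hc]
      exact (summable_aux k hk _).mul_left _
    · simp only [if_neg hc, mul_zero]
      exact summable_zero)]
  have hsum : ∑' n : ℕ, ∑ t ∈ Finset.range (p ^ m), χ (t : ZMod (p ^ m)) *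
      (if Nat.Coprime t (p ^ m) then
        (if t * n % p ^ m = 1 % p ^ m then (moebius n : ℂ) / (n : ℂ) ^ k else 0) else 0)
      = ∑' n : ℕ, (starRingEnd ℂ) (χ (n : ZMod (p ^ m))) * ((moebius n : ℂ) / (n : ℂ) ^ k) :=
    tsum_congr fun n => key_sum (p ^ m) χ _ n
  rw [hsum]
  -- identify the RHS
  have hs : 1 < ((k : ℕ) : ℂ).re := by
    rw [Complex.natCast_re]; exact_mod_cast (by omega : 1 < k)
  rw [DirichletCharacter.LFunction_eq_LSeries _ hs,
    inv_eq_of_mul_eq_one_right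
      (DirichletCharacter.LSeries.mul_mu_eq_one (χ.ringHomComp (starRingEnd ℂ)) hs)]
  rw [LSeries]
  refine (tsum_congr fun n => ?_).symm
  rw [LSeries.term_def]
  rcases eq_or_ne n 0 with rfl | hn
  · simp
  · rw [if_neg hn, Pi.mul_apply, Complex.cpow_natCast, mul_div_assoc]
    rfl
end

section
/- The assignment c_{k}(t + p^m ℤ_p) = ∑_{n : tn ≡ 1 mod p^m} μ(n)/n^k (for t coprime to p, k ≥ 2 fixed, and 0 if p divides t) defines a distribution on ℤ_p^*: for every t coprime to p, ∑_{t' mod p^{m+1}, t' ≡ t mod p^m} c_k(t' + p^{m+1}ℤ_p) = c_k(t + p^m ℤ_p). -/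
open ArithmeticFunction

lemma summable_moebius_ite (k : ℕ) (hk : 2 ≤ k) (c : ℕ → Prop) [DecidablePred c] :
    Summable fun n : ℕ => if c n then (moebius n : ℂ) / (n : ℂ) ^ k else 0 := by
  apply Summable.of_norm_bounded (g := fun n : ℕ => 1 / (n : ℝ) ^ k)
    (Real.summable_one_div_nat_pow.mpr (by omega))
  intro n
  by_cases h : c n
  · simp only [h, if_true, norm_div, norm_pow, Complex.norm_natCast]
    have h1 : ‖(moebius n : ℂ)‖ ≤ 1 := by
      rw [Complex.norm_intCast]
      exact_mod_cast abs_moebius_le_one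
    gcongr
  · simp only [h, if_false, norm_zero]
    positivity

/-- The assignment `c_k(t + p^m ℤ_p) = ∑_{n : tn ≡ 1 mod p^m} μ(n)/n^k` defines a
distribution on `ℤ_p^*`: the values on the cosets mod `p^{m+1}` refining a coset
mod `p^m` sum up to the value on that coset. -/
theorem moebius_ct_distribution_property (p k : ℕ) (hp : p.Prime) (hk : 2 ≤ k)
    (m : ℕ) (hm : 1 ≤ m) (t : ℕ) (ht : Nat.Coprime t p) :
    ∑ t' ∈ (Finset.range (p ^ (m + 1))).filter (fun t' => t' % p ^ m = t % p ^ m),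
        (∑' n : ℕ,
          (if t' * n % p ^ (m + 1) = 1 % p ^ (m + 1) then (moebius n : ℂ) / (n : ℂ) ^ k else 0))
      = ∑' n : ℕ, (if t * n % p ^ m = 1 % p ^ m then (moebius n : ℂ) / (n : ℂ) ^ k else 0) := by
  set N := p ^ m with hN
  set M := p ^ (m + 1) with hM
  have hNdvdM : N ∣ M := pow_dvd_pow p (by omega)
  have hp1 : 1 < p := hp.one_lt
  have hM1 : 1 < M := one_lt_pow₀ hp1 (by omega)
  have hN1 : 1 < N := one_lt_pow₀ hp1 (by omega)
  have hpN : p ∣ N := dvd_pow_self p (by omega)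
  haveI : NeZero M := ⟨by omega⟩
  rw [← Summable.tsum_finsetSum (fun i _ => summable_moebius_ite k hk _)]
  refine tsum_congr fun n => ?_
  by_cases hQ : t * n % N = 1 % N
  · -- n is coprime to p
    have hnp : Nat.Coprime n p := by
      rw [Nat.coprime_comm, hp.coprime_iff_not_dvd]
      intro hdvd
      have h1 : t * n % p = 1 % p := by
        have := (Nat.ModEq.of_dvd hpN (hQ : Nat.ModEq N (t*n) 1))
        exact this
      rw [Nat.mod_eq_zero_of_dvd (hdvd.mul_left t), Nat.one_mod_eq_one.mpr (by omega)] at h1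
      omega
    have hnM : Nat.Coprime n M := hnp.pow_right _
    have hnN : Nat.Coprime n N := hnp.pow_right _
    set t₀ : ℕ := ((n : ZMod M)⁻¹).val with ht₀
    have ht₀M : t₀ < M := ZMod.val_lt _
    have ht₀cast : (t₀ : ZMod M) = (n : ZMod M)⁻¹ := by
      simp [ht₀, ZMod.natCast_val, ZMod.cast_id]
    have hmulM : t₀ * n % M = 1 % M := by
      have : ((t₀ * n : ℕ) : ZMod M) = ((1 : ℕ) : ZMod M) := by
        push_cast
        rw [ht₀cast, mul_comm, ZMod.coe_mul_inv_eq_one n hnM]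
      exact (ZMod.natCast_eq_natCast_iff _ _ _).mp this
    have hmulN : t₀ * n % N = 1 % N := Nat.ModEq.of_dvd hNdvdM hmulM
    have ht₀N : t₀ % N = t % N := by
      have : t₀ * n % N = t * n % N := hmulN.trans hQ.symm
      exact Nat.ModEq.cancel_right_of_coprime (by rwa [Nat.coprime_comm] at hnN) this
    rw [if_pos hQ]
    have hmem : t₀ ∈ (Finset.range M).filter (fun t' => t' % N = t % N) :=
      Finset.mem_filter.mpr ⟨Finset.mem_range.mpr ht₀M, ht₀N⟩
    rw [Finset.sum_eq_single_of_mem t₀ hmem ?_, if_pos hmulM]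
    intro b hb hne
    rw [Finset.mem_filter, Finset.mem_range] at hb
    rw [if_neg]
    intro hPb
    apply hne
    have : b * n % M = t₀ * n % M := hPb.trans hmulM.symm
    have hbt : b % M = t₀ % M :=
      Nat.ModEq.cancel_right_of_coprime (by rwa [Nat.coprime_comm] at hnM) this
    rwa [Nat.mod_eq_of_lt hb.1, Nat.mod_eq_of_lt ht₀M] at hbt
  · rw [if_neg hQ]
    apply Finset.sum_eq_zero
    intro b hb
    rw [Finset.mem_filter] at hb
    rw [if_neg]
    intro hPb
    apply hQ
    have h1 : b * n % N = 1 % N := Nat.ModEq.of_dvd hNdvdM hPb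
    have h2 : t * n % N = b * n % N := Nat.ModEq.mul_right n (hb.2.symm : Nat.ModEq N t b)
    exact h2.trans h1
end
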